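/- Let m, k be integers with 1 ≤ k < m, and let ḡ_{(m,k)} be the associated function on 𝔽_3^m. Then the real part of the Walsh transform of ḡ_{(m,k)} at the zero vector equals -3^m/2 + (3/2)·Σ_{j=0}^{k} 2^j·C(m, j). -/

import Mathlib

open Finset

/-- `ζ = exp(2πi/3)`, a primitive cube root of unity. -/
noncomputable def zeta3 : ℂ := Complex.exp (2 * Real.pi * Complex.I / 3)

/-- The Walsh transform of `h : 𝔽_3^m → 𝔽_3` at `w ∈ 𝔽_3^m`:
`ĥ(w) = Σ_{x ∈ 𝔽_3^m} ζ^{h(x) - w·x}`. -/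
noncomputable def walsh {m : ℕ} (h : (Fin m → ZMod 3) → ZMod 3)
    (w : Fin m → ZMod 3) : ℂ :=
  ∑ x : Fin m → ZMod 3, zeta3 ^ (h x - ∑ i, w i * x i).val

/-- The function `ḡ_{(m,k)} : 𝔽_3^m → 𝔽_3`: `1` if `wt(x) > k`, `0` if `wt(x) ≤ k`. -/
def gbar {m : ℕ} (k : ℕ) (x : Fin m → ZMod 3) : ZMod 3 :=
  if k < hammingNorm x then 1 else 0

open Polynomial in
lemma gen_poly (m : ℕ) :
    ∑ x : Fin m → ZMod 3, (Polynomial.X : ℝ[X]) ^ hammingNorm x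
      = (2 * Polynomial.X + 1) ^ m := by
  have h1 : ∀ x : Fin m → ZMod 3,
      (Polynomial.X : ℝ[X]) ^ hammingNorm x
        = ∏ i, (if x i ≠ 0 then (Polynomial.X : ℝ[X]) else 1) := by
    intro x
    rw [hammingNorm, Finset.card_filter, ← Finset.prod_pow_eq_pow_sum]
    exact Finset.prod_congr rfl fun i _ => by split <;> simp
  simp_rw [h1]
  rw [← Fintype.prod_sum (f := fun (_ : Fin m) (a : ZMod 3) =>
      (if a ≠ 0 then (Polynomial.X : ℝ[X]) else 1))]
  have h2 : ∑ a : ZMod 3, (if a ≠ 0 then (Polynomial.X : ℝ[X]) else 1)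
      = 2 * Polynomial.X + 1 := by
    show ∑ a : Fin 3, _ = _
    rw [Fin.sum_univ_three]
    change ((if (0:ZMod 3) ≠ 0 then X else 1) + (if (1:ZMod 3) ≠ 0 then X else 1)
      + (if (2:ZMod 3) ≠ 0 then X else 1) : ℝ[X]) = _
    rw [if_neg (show ¬((0:ZMod 3) ≠ 0) by decide), if_pos (show (1:ZMod 3) ≠ 0 by decide),
      if_pos (show (2:ZMod 3) ≠ 0 by decide)]
    ring
  rw [Finset.prod_congr rfl fun i _ => h2, Finset.prod_const, Finset.card_univ,
    Fintype.card_fin]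

open Polynomial in
lemma count_norm (m j : ℕ) (hj : j ≤ m) :
    ((Finset.univ.filter fun x : Fin m → ZMod 3 => hammingNorm x = j).card : ℝ)
      = 2 ^ j * (m.choose j : ℝ) := by
  have h := congrArg (fun p : Polynomial ℝ => p.coeff j) (gen_poly m)
  rw [Polynomial.finset_sum_coeff, add_pow, Polynomial.finset_sum_coeff] at h
  have h2 : ∀ x : ℕ, ((2 : ℝ[X]) ^ x) = Polynomial.C ((2:ℝ)^x) := by
    intro x; rw [map_pow, map_ofNat]
  simp only [Polynomial.coeff_X_pow, mul_pow, one_pow, mul_one, h2,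
    Polynomial.coeff_natCast_mul, Polynomial.coeff_mul_natCast, Polynomial.coeff_C_mul,
    mul_ite, mul_zero, mul_one, ite_mul, zero_mul] at h
  rw [Finset.sum_ite_eq (Finset.range (m+1)) j,
    if_pos (Finset.mem_range.mpr (by omega))] at h
  rw [← h]
  simp [Finset.sum_boole, eq_comm]

lemma zeta3_re : zeta3.re = -(1/2) := by
  have h1 : (2 * Real.pi * Complex.I / 3) = ((2 * Real.pi / 3 : ℝ) : ℂ) * Complex.I := by
    push_cast; ring
  rw [zeta3, h1, Complex.exp_ofReal_mul_I_re]
  have h2 : 2 * Real.pi / 3 = Real.pi - Real.pi / 3 := by ring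
  rw [h2, Real.cos_pi_sub, Real.cos_pi_div_three]

/-- For `1 ≤ k < m`,
`Re(ḡ̂_{(m,k)}(0)) = -3^m/2 + (3/2)·Σ_{j=0}^{k} 2^j·C(m,j)`. -/
theorem stmt_13 (m k : ℕ) (hk1 : 1 ≤ k) (hkm : k < m) :
    (walsh (gbar (m := m) k) 0).re =
      -(3 : ℝ) ^ m / 2 + 3 / 2 * ∑ j ∈ Finset.range (k + 1), (2 : ℝ) ^ j * (m.choose j : ℝ) := by
  have hterm : ∀ x : Fin m → ZMod 3,
      (zeta3 ^ (gbar (m := m) k x - ∑ i, (0 : Fin m → ZMod 3) i * x i).val).re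
        = if k < hammingNorm x then -(1/2 : ℝ) else 1 := by
    intro x
    simp only [Pi.zero_apply, zero_mul, Finset.sum_const_zero, sub_zero, gbar]
    split
    · norm_num [zeta3_re, ZMod.val_one]
    · norm_num
  rw [walsh, Complex.re_sum]
  rw [Finset.sum_congr rfl fun x _ => hterm x, Finset.sum_ite, Finset.sum_const,
    Finset.sum_const]
  set A := (Finset.univ.filter fun x : Fin m → ZMod 3 => ¬ k < hammingNorm x).card with hA
  set B := (Finset.univ.filter fun x : Fin m → ZMod 3 => k < hammingNorm x).card with hB
  have hBA : B + A = 3 ^ m := by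
    rw [hB, hA, Finset.card_filter_add_card_filter_not, Finset.card_univ]
    simp [Fintype.card_fun]
  have hAval : (A : ℝ) = ∑ j ∈ Finset.range (k + 1), (2 : ℝ) ^ j * (m.choose j : ℝ) := by
    have hcard : A = ∑ j ∈ Finset.range (k + 1),
        ((Finset.univ.filter fun x : Fin m → ZMod 3 => ¬ k < hammingNorm x).filter
          fun x => hammingNorm x = j).card := by
      exact Finset.card_eq_sum_card_fiberwise fun x hx => by
        simp only [Finset.coe_filter, Set.mem_setOf_eq, Finset.mem_filter, not_lt] at hx
        exact Finset.mem_range.mpr (by omega)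
    have hfib : ∀ j ∈ Finset.range (k + 1),
        ((Finset.univ.filter fun x : Fin m → ZMod 3 => ¬ k < hammingNorm x).filter
          fun x => hammingNorm x = j)
        = Finset.univ.filter fun x : Fin m → ZMod 3 => hammingNorm x = j := by
      intro j hj
      rw [Finset.filter_filter]
      apply Finset.filter_congr
      intro x _
      simp only [Finset.mem_range] at hj
      constructor
      · exact fun h => h.2
      · intro h; exact ⟨by omega, h⟩
    rw [hcard]
    push_cast
    refine Finset.sum_congr rfl fun j hj => ?_
    rw [hfib j hj]
    exact count_norm m j (by have := Finset.mem_range.mp hj; omega)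
  have hBval : (B : ℝ) = 3 ^ m - A := by
    have h3 : (B : ℝ) + A = 3 ^ m := by exact_mod_cast congrArg (Nat.cast : ℕ → ℝ) hBA
    linarith
  simp only [nsmul_eq_mul, smul_eq_mul]
  rw [hBval, hAval]
  ring
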